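/- Let $u = \tfrac{1}{\sqrt 2}\begin{pmatrix}1&1\\ e^{i\alpha}&-e^{i\alpha}\end{pmatrix}$ and $v = \tfrac{1}{\sqrt 2}\begin{pmatrix}1&1\\ e^{i\beta}&-e^{i\beta}\end{pmatrix}$, and let $E_{\Delta}: M_2(\mathbb{C}) \to \Delta_2$ be the diagonal conditional expectation, $w = u^* v$. Define $c = |w_{11}|^4 + |w_{12}|^4$. Then for any $A = (a_{ij}) \in M_2(\mathbb{C})$: $E_{\Delta}E_{w\Delta w^*}E_{\Delta}(A) = \mathrm{diag}(c\,a_{11} + (1-c)a_{22},\; (1-c)a_{11} + c\,a_{22})$, and $2c - 1 = \cos^2(\alpha - \beta)$. Consequently the nonzero spectrum of the operator $E_{\Delta}E_{w\Delta w^*}E_{\Delta} - \mathrm{tr}(\cdot)I_2$ on $M_2(\mathbb{C})$ is $\{\cos^2(\alpha-\beta)\}$ (when $\cos(\alpha-\beta) \ne 0$). -/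

import Mathlib

open Matrix

set_option maxHeartbeats 1000000 in
/-- For `w = u* v` and `c = |w₁₁|⁴ + |w₁₂|⁴`:
`E_Δ E_{wΔw*} E_Δ (A) = diag(c a₁₁ + (1-c) a₂₂, (1-c) a₁₁ + c a₂₂)`,
`2c - 1 = cos²(α - β)`, and the nonzero spectrum of
`E_Δ E_{wΔw*} E_Δ - tr(·) I₂` is `{cos²(α-β)}` when `cos(α-β) ≠ 0`. -/
theorem stmt18 (α β : ℝ) (u v w : Matrix (Fin 2) (Fin 2) ℂ)
    (hu : u = (Real.sqrt 2 : ℂ)⁻¹ •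
        !![1, 1; Complex.exp (α * Complex.I), -Complex.exp (α * Complex.I)])
    (hv : v = (Real.sqrt 2 : ℂ)⁻¹ •
        !![1, 1; Complex.exp (β * Complex.I), -Complex.exp (β * Complex.I)])
    (hw : w = uᴴ * v)
    (c : ℝ) (hc : c = ‖w 0 0‖ ^ 4 + ‖w 0 1‖ ^ 4)
    (EΔ : Matrix (Fin 2) (Fin 2) ℂ → Matrix (Fin 2) (Fin 2) ℂ)
    (hEΔ : ∀ A, EΔ A = Matrix.diagonal fun i => A i i)
    (T : Module.End ℂ (Matrix (Fin 2) (Fin 2) ℂ))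
    (hT : ∀ A, T A = EΔ (w * EΔ (wᴴ * EΔ A * w) * wᴴ)
        - (Matrix.trace A / 2) • (1 : Matrix (Fin 2) (Fin 2) ℂ)) :
    (∀ A : Matrix (Fin 2) (Fin 2) ℂ,
        EΔ (w * EΔ (wᴴ * EΔ A * w) * wᴴ)
          = Matrix.diagonal (![(c : ℂ) * A 0 0 + (1 - (c : ℂ)) * A 1 1,
              (1 - (c : ℂ)) * A 0 0 + (c : ℂ) * A 1 1] : Fin 2 → ℂ)) ∧
    2 * c - 1 = Real.cos (α - β) ^ 2 ∧
    (Real.cos (α - β) ≠ 0 →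
      spectrum ℂ T \ {0} = {((Real.cos (α - β) : ℂ)) ^ 2}) := by
  -- Step 1: explicit form of `w`
  have hw' : w = !![(1 + Complex.exp ((↑β - ↑α) * Complex.I))/2,
        (1 - Complex.exp ((↑β - ↑α) * Complex.I))/2;
      (1 - Complex.exp ((↑β - ↑α) * Complex.I))/2,
        (1 + Complex.exp ((↑β - ↑α) * Complex.I))/2] := by
    subst hu hv hw
    have h2 : ((Real.sqrt 2 : ℂ))⁻¹ ^ 2 = 1/2 := by
      rw [sq, ← mul_inv]
      norm_num [← Complex.ofReal_mul, Real.mul_self_sqrt]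
    have hconj : (starRingEnd ℂ) (Complex.exp (α * Complex.I))
        = Complex.exp (-(α * Complex.I)) := by
      rw [← Complex.exp_conj]; simp [Complex.conj_I]
    have hmul : Complex.exp ((↑β - ↑α) * Complex.I) =
        Complex.exp (-(↑α * Complex.I)) * Complex.exp (Complex.I * ↑β) := by
      rw [← Complex.exp_add]; ring_nf
    ext i j
    fin_cases i <;> fin_cases j <;>
      simp [Matrix.mul_apply, Fin.sum_univ_two, conjTranspose_apply, hconj] <;>
      rw [hmul] <;> ring_nf <;> rw [h2] <;> ring
  -- Step 2: `2c - 1 = cos²(α - β)`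
  have h2 : 2 * c - 1 = Real.cos (α - β) ^ 2 := by
    obtain ⟨x, y, hxy, hcx, he⟩ : ∃ x y : ℝ, x^2 + y^2 = 1 ∧ Real.cos (α - β) = x ∧
        Complex.exp ((↑β - ↑α) * Complex.I) = (x:ℝ) + (y:ℝ) * Complex.I := by
      refine ⟨Real.cos (β - α), Real.sin (β - α), by rw [add_comm]; exact Real.sin_sq_add_cos_sq _,
        by rw [← Real.cos_neg]; ring_nf, ?_⟩
      rw [show ((β:ℂ) - α) = ((β - α : ℝ) : ℂ) by push_cast; ring, Complex.exp_mul_I]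
      norm_cast
    have e00 : w 0 0 = (1 + Complex.exp ((↑β - ↑α) * Complex.I))/2 := by rw [hw']; rfl
    have e01 : w 0 1 = (1 - Complex.exp ((↑β - ↑α) * Complex.I))/2 := by rw [hw']; rfl
    have h1 : ‖w 0 0‖ ^ 4 = (((1 + x)^2 + y^2)/4)^2 := by
      rw [show (4:ℕ) = 2*2 from rfl, pow_mul, Complex.sq_norm, e00, he]
      rw [show ((1:ℂ) + ((x:ℂ) + (y:ℂ)*Complex.I))/2
          = ((((1+x)/2 : ℝ)) : ℂ) + (((y/2 : ℝ)):ℂ) * Complex.I by push_cast; ring]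
      rw [Complex.normSq_add_mul_I]
      ring
    have h2' : ‖w 0 1‖ ^ 4 = (((1 - x)^2 + y^2)/4)^2 := by
      rw [show (4:ℕ) = 2*2 from rfl, pow_mul, Complex.sq_norm, e01, he]
      rw [show ((1:ℂ) - ((x:ℂ) + (y:ℂ)*Complex.I))/2
          = ((((1-x)/2 : ℝ)) : ℂ) + (((-y/2 : ℝ)):ℂ) * Complex.I by push_cast; ring]
      rw [Complex.normSq_add_mul_I]
      ring
    rw [hc, h1, h2', hcx]
    nlinarith [hxy]
  -- Step 3: the conditional-expectation composition formula
  have H : (∀ A : Matrix (Fin 2) (Fin 2) ℂ,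
      EΔ (w * EΔ (wᴴ * EΔ A * w) * wᴴ)
        = Matrix.diagonal (![(c : ℂ) * A 0 0 + (1 - (c : ℂ)) * A 1 1,
            (1 - (c : ℂ)) * A 0 0 + (c : ℂ) * A 1 1] : Fin 2 → ℂ)) := by
    set E := Complex.exp ((↑β - ↑α) * Complex.I) with hE
    have hE0 : E ≠ 0 := Complex.exp_ne_zero _
    have hEc : (starRingEnd ℂ) E = E⁻¹ := by
      rw [hE, ← Complex.exp_conj, ← Complex.exp_neg]
      congr 1
      simp [Complex.conj_I]
    clear_value E
    have e00 : w 0 0 = (1 + E)/2 := by rw [hw']; rfl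
    have e01 : w 0 1 = (1 - E)/2 := by rw [hw']; rfl
    have e10 : w 1 0 = (1 - E)/2 := by rw [hw']; rfl
    have e11 : w 1 1 = (1 + E)/2 := by rw [hw']; rfl
    have hcC : (c : ℂ) = ((1+E) * (1+E⁻¹)/4)^2 + ((1-E) * (1-E⁻¹)/4)^2 := by
      have habs : ∀ z : ℂ, ((‖z‖ ^ 4 : ℝ) : ℂ) = (z * (starRingEnd ℂ) z)^2 := by
        intro z
        rw [Complex.mul_conj, show (4:ℕ) = 2*2 from rfl, pow_mul, Complex.sq_norm]
        push_cast
        ring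
      rw [hc]
      push_cast [habs]
      rw [e00, e01]
      simp only [map_div₀, map_add, map_sub, _root_.map_one, map_ofNat, hEc]
      ring
    intro A
    rw [hEΔ, hEΔ, hEΔ]
    ext i j
    by_cases hij : i = j
    · subst hij
      rw [Matrix.diagonal_apply_eq, Matrix.diagonal_apply_eq]
      simp only [Matrix.mul_apply, Matrix.diagonal_apply, Fin.sum_univ_two,
        conjTranspose_apply, RCLike.star_def]
      fin_cases i <;>
        simp only [Fin.isValue, if_true, if_false, Fin.zero_eta, Fin.mk_one, one_ne_zero,
          zero_ne_one, ite_true, ite_false, Matrix.cons_val_zero, Matrix.cons_val_one,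
          Matrix.head_cons, reduceIte, e00, e01, e10, e11, map_div₀, map_add, map_sub,
          _root_.map_one, map_ofNat, hEc] <;>
        rw [hcC] <;>
        field_simp [hE0] <;>
        ring
    · rw [Matrix.diagonal_apply_ne _ hij, Matrix.diagonal_apply_ne _ hij]
  -- Step 4: the spectrum
  refine ⟨H, h2, fun hcos => ?_⟩
  set s : ℂ := ((Real.cos (α - β) : ℂ)) ^ 2 with hs
  have hs0 : s ≠ 0 := pow_ne_zero _ (Complex.ofReal_ne_zero.mpr hcos)
  have hcC : (c : ℂ) = (1 + s)/2 := by
    have hcr : c = (1 + Real.cos (α - β) ^ 2)/2 := by linarith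
    rw [hcr, hs]
    push_cast
    ring
  set D : Matrix (Fin 2) (Fin 2) ℂ := !![1, 0; 0, -1] with hD
  have hTA : ∀ A : Matrix (Fin 2) (Fin 2) ℂ,
      T A = ((s/2) * (A 0 0 - A 1 1)) • D := by
    intro A
    rw [hT, H A]
    ext i j
    fin_cases i <;> fin_cases j <;>
      simp [Matrix.diagonal, Matrix.trace_fin_two, hcC, Matrix.one_apply, hD] <;> ring
  have hD0 : D ≠ 0 := fun h => by simpa [hD] using congrFun (congrFun h 0) 0
  have hTD : T D = s • D := by
    rw [hTA]
    have : D 0 0 - D 1 1 = 2 := by norm_num [hD]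
    rw [this]
    congr 1
    ring
  have hmem : s ∈ spectrum ℂ T := by
    rw [← Module.End.hasEigenvalue_iff_mem_spectrum]
    exact Module.End.hasEigenvalue_of_hasEigenvector
      ⟨Module.End.mem_eigenspace_iff.mpr hTD, hD0⟩
  ext μ
  simp only [Set.mem_diff, Set.mem_singleton_iff]
  constructor
  · rintro ⟨hμ, hμ0⟩
    have hev := Module.End.HasEigenvalue.of_mem_spectrum hμ
    obtain ⟨A, hA⟩ := hev.exists_hasEigenvector
    have hAe : T A = μ • A := Module.End.mem_eigenspace_iff.mp hA.1
    have hA0 : A ≠ 0 := hA.2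
    have hTA2 : T (T A) = s • T A := by
      rw [hTA A, _root_.map_smul, hTD, smul_comm]
    have hTA3 : T (T A) = μ • T A := by rw [hAe, _root_.map_smul, hAe]
    have hTAne : T A ≠ 0 := by
      rw [hAe]
      exact smul_ne_zero hμ0 hA0
    have : (s - μ) • T A = 0 := by
      rw [sub_smul, ← hTA2, ← hTA3, sub_self]
    rcases smul_eq_zero.mp this with h | h
    · exact (sub_eq_zero.mp h).symm
    · exact absurd h hTAne
  · rintro rfl
    exact ⟨hmem, hs0⟩
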